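/- Fix n ∈ ℕ and X ∈ ℝ. Then the relativistic Hermite polynomial converges to the classical Hermite polynomial as the parameter tends to infinity: lim_{N→+∞} H_n^N(X) = H_n(X), where the limit is taken over real N → +∞. -/

import Mathlib

open Real MeasureTheory Filter

/-- Relativistic Hermite polynomial via its Rodrigues formula. -/
noncomputable def relHermite (n : ℕ) (N : ℝ) (X : ℝ) : ℝ :=
  (-1 : ℝ)^n * (1 + X^2/N)^(N + (n : ℝ)) *
    iteratedDeriv n (fun t : ℝ => (1 + t^2/N)^(-N)) X

/-- Cariñena polynomial with positive parameter via its Rodrigues formula. -/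
noncomputable def carinenaPos (n : ℕ) (𝒩 : ℝ) (X : ℝ) : ℝ :=
  (-1 : ℝ)^n * (1 + X^2/𝒩)^(𝒩 + 1/2) *
    iteratedDeriv n (fun t : ℝ => (1 + t^2/𝒩)^((n : ℝ) - 𝒩 - 1/2)) X

/-- Cariñena polynomial with negative parameter 𝒩 = -ν via its Rodrigues formula. -/
noncomputable def carinenaNeg (n : ℕ) (ν : ℝ) (X : ℝ) : ℝ :=
  (-1 : ℝ)^n * (1 - X^2/ν)^((1:ℝ)/2 - ν) *
    iteratedDeriv n (fun t : ℝ => (1 - t^2/ν)^((n : ℝ) + ν - 1/2)) X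

/-- The constant α_{n,ν} = (2ν)_n / (2^n n! (ν+1/2)_n). -/
noncomputable def alphaConst (n : ℕ) (ν : ℝ) : ℝ :=
  (ascPochhammer ℝ n).eval (2*ν) /
    (2^n * (n.factorial : ℝ) * (ascPochhammer ℝ n).eval (ν + 1/2))

/-- Gegenbauer polynomial via its Rodrigues formula. -/
noncomputable def gegenbauer (n : ℕ) (ν : ℝ) (X : ℝ) : ℝ :=
  alphaConst n ν * (-1 : ℝ)^n * (1 - X^2)^((1:ℝ)/2 - ν) *
    iteratedDeriv n (fun t : ℝ => (1 - t^2)^((n : ℝ) + ν - 1/2)) X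

/-- Classical (physicists') Hermite polynomial via its Rodrigues formula. -/
noncomputable def hermiteClassical (n : ℕ) (X : ℝ) : ℝ :=
  (-1 : ℝ)^n * Real.exp (X^2) * iteratedDeriv n (fun t : ℝ => Real.exp (-t^2)) X

section Aux
open Polynomial

/-- Two-variable polynomial family: outer variable is `x`, inner variable is `ε`. -/
noncomputable def Qp : ℕ → Polynomial (Polynomial ℝ)
  | 0 => 1
  | (k+1) => (Qp k).derivative * (1 + Polynomial.C Polynomial.X * Polynomial.X ^ 2)
      - Polynomial.C (2 + Polynomial.C (2 * (k:ℝ)) * Polynomial.X) * Polynomial.X * Qp k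

noncomputable def qf (n : ℕ) (ε x : ℝ) : ℝ :=
  ((Qp n).map (Polynomial.evalRingHom ε)).eval x

lemma qf_zero (ε x : ℝ) : qf 0 ε x = 1 := by simp [qf, Qp]

lemma qf_succ (k : ℕ) (ε x : ℝ) :
    qf (k+1) ε x =
      (Polynomial.derivative ((Qp k).map (Polynomial.evalRingHom ε))).eval x * (1 + ε * x^2)
        - (2 + 2*(k:ℝ)*ε) * x * qf k ε x := by
  simp [qf, Qp, Polynomial.derivative_map]

lemma eval_map_eval (p : Polynomial (Polynomial ℝ)) (ε x : ℝ) :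
    (p.map (Polynomial.evalRingHom ε)).eval x = (p.eval (Polynomial.C x)).eval ε := by
  induction p using Polynomial.induction_on' with
  | add p q hp hq => simp only [Polynomial.map_add, Polynomial.eval_add, hp, hq]
  | monomial k a =>
      simp only [Polynomial.map_monomial, Polynomial.eval_monomial, Polynomial.coe_evalRingHom,
        Polynomial.eval_mul, Polynomial.eval_pow, Polynomial.eval_C]

lemma iter_exp (n : ℕ) :
    ∀ x : ℝ, iteratedDeriv n (fun t : ℝ => Real.exp (-t^2)) x = qf n 0 x * Real.exp (-x^2) := by
  induction n with
  | zero => intro x; simp [qf_zero]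
  | succ k ih =>
    intro x
    rw [iteratedDeriv_succ]
    have hfun : iteratedDeriv k (fun t : ℝ => Real.exp (-t^2))
        = fun x => qf k 0 x * Real.exp (-x^2) := funext ih
    rw [hfun]
    have hpoly := Polynomial.hasDerivAt ((Qp k).map (Polynomial.evalRingHom 0)) x
    have hexp : HasDerivAt (fun x : ℝ => Real.exp (-x^2))
        (Real.exp (-x^2) * (-(2*x))) x := by
      have h1 : HasDerivAt (fun x : ℝ => -x^2) (-(2*x)) x := by
        simpa using (hasDerivAt_pow 2 x).fun_neg
      exact h1.exp
    have hd := hpoly.fun_mul hexp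
    simp only [qf]
    rw [hd.deriv]
    have hs := qf_succ k 0 x
    simp only [qf] at hs
    rw [hs]
    ring

lemma iter_rpow (N : ℝ) (hN : 0 < N) (n : ℕ) :
    ∀ x : ℝ, iteratedDeriv n (fun t : ℝ => (1 + t^2/N)^(-N)) x
      = qf n (1/N) x * (1 + x^2/N)^(-(N + (n:ℝ))) := by
  have hu : ∀ y : ℝ, 0 < 1 + y^2/N := fun y => by positivity
  induction n with
  | zero => intro x; simp [qf_zero]
  | succ k ih =>
    intro x
    rw [iteratedDeriv_succ]
    have hfun : iteratedDeriv k (fun t : ℝ => (1 + t^2/N)^(-N))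
        = fun x => qf k (1/N) x * (1 + x^2/N)^(-(N + (k:ℝ))) := funext ih
    rw [hfun]
    set c : ℝ := -(N + (k:ℝ)) with hc
    have hpoly := Polynomial.hasDerivAt ((Qp k).map (Polynomial.evalRingHom (1/N))) x
    have hin : HasDerivAt (fun x : ℝ => 1 + x^2/N) (2*x/N) x := by
      simpa using ((hasDerivAt_pow 2 x).div_const N).const_add 1
    have hrp : HasDerivAt (fun x : ℝ => (1 + x^2/N)^c)
        (c * (1 + x^2/N)^(c-1) * (2*x/N)) x := by
      have := hin.rpow_const (p := c) (Or.inl (hu x).ne')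
      convert this using 1; ring
    have hd := hpoly.fun_mul hrp
    simp only [qf]
    rw [hd.deriv]
    have hs := qf_succ k (1/N) x
    simp only [qf] at hs
    rw [hs]
    have hsplit : (1 + x^2/N)^c = (1 + x^2/N) * (1 + x^2/N)^(c-1) := by
      nth_rewrite 1 [show c = 1 + (c-1) by ring]
      rw [Real.rpow_add (hu x), Real.rpow_one]
    have hexp2 : -(N + ((k:ℕ)+1:ℕ) : ℝ) = c - 1 := by push_cast; ring
    push_cast
    rw [hsplit, show -(N + ((k:ℝ)+1)) = c - 1 by rw [hc]; ring]
    field_simp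
    ring
end Aux

theorem relHermite_tendsto_hermite (n : ℕ) (X : ℝ) :
    Filter.Tendsto (fun N : ℝ => relHermite n N X) Filter.atTop
      (nhds (hermiteClassical n X)) := by
  have hcont : Continuous fun ε : ℝ => qf n ε X := by
    simp only [qf, eval_map_eval]
    exact Polynomial.continuous _
  have h1 : Tendsto (fun N : ℝ => 1/N) atTop (nhds (0:ℝ)) := by
    simpa [one_div] using tendsto_inv_atTop_zero
  have h2 : Tendsto (fun N : ℝ => (-1:ℝ)^n * qf n (1/N) X) atTop
      (nhds ((-1:ℝ)^n * qf n 0 X)) := ((hcont.tendsto 0).comp h1).const_mul _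
  have hH : hermiteClassical n X = (-1:ℝ)^n * qf n 0 X := by
    rw [hermiteClassical, iter_exp n X]
    have h : Real.exp (X^2) * Real.exp (-X^2) = 1 := by
      rw [← Real.exp_add]; simp
    linear_combination ((-1:ℝ)^n * qf n 0 X) * h
  rw [hH]
  apply h2.congr'
  filter_upwards [eventually_gt_atTop (0:ℝ)] with N hN
  rw [relHermite, iter_rpow N hN n X]
  have hu : 0 < 1 + X^2/N := by positivity
  have h3 : (1+X^2/N)^(N+(n:ℝ)) * (1+X^2/N)^(-(N+(n:ℝ))) = 1 := by
    rw [← Real.rpow_add hu, show (N+(n:ℝ)) + -(N+(n:ℝ)) = 0 by ring, Real.rpow_zero]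
  linear_combination (-((-1:ℝ)^n * qf n (1/N) X)) * h3
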